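/- If n = 3k - 1 with k ≥ 1, then for every graph G on n vertices the number of maximal independent sets of size k is at most 2·3^(k-1). -/

import Mathlib

open Finset SimpleGraph

/-- A set of vertices is independent: pairwise nonadjacent. -/
def IndepOn {V : Type*} (G : SimpleGraph V) (S : Set V) : Prop :=
  S.Pairwise fun a b => ¬ G.Adj a b

/-- A maximal independent set (as a finset): independent and not properly
contained in any other independent set. -/
def MaxIndep {V : Type*} (G : SimpleGraph V) (S : Finset V) : Prop :=
  IndepOn G ↑S ∧ ∀ T : Finset V, IndepOn G ↑T → S ⊆ T → S = T

/-- A maximal clique (as a finset): a clique not properly contained in any other clique. -/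
def MaxClique {V : Type*} (G : SimpleGraph V) (S : Finset V) : Prop :=
  G.IsClique ↑S ∧ ∀ T : Finset V, G.IsClique ↑T → S ⊆ T → S = T


def h3 : ℕ → ℕ
  | 0 => 1
  | 1 => 1
  | 2 => 2
  | 3 => 3
  | 4 => 4
  | (n+5) => 3 * h3 (n+2)

lemma h3_pos : ∀ n, 1 ≤ h3 n
  | 0 => le_refl 1
  | 1 => le_refl 1
  | 2 => by simp [h3]
  | 3 => by simp [h3]
  | 4 => by simp [h3]
  | (n+5) => by
      have := h3_pos (n+2)
      simp only [h3]; omega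

lemma h3_succ : ∀ n, h3 n ≤ h3 (n+1)
  | 0 => le_refl 1
  | 1 => by simp [h3]
  | 2 => by simp [h3]
  | 3 => by simp [h3]
  | 4 => by simp [h3]
  | (n+5) => by
      have h := h3_succ (n+2)
      show 3 * h3 (n+2) ≤ 3 * h3 (n+3)
      have e : n+2+1 = n+3 := rfl
      rw [e] at h
      omega

lemma h3_mono : Monotone h3 := monotone_nat_of_le_succ h3_succ

lemma h3_two : ∀ n, 2 * h3 n ≤ h3 (n+2)
  | 0 => by simp [h3]
  | 1 => by simp [h3]
  | 2 => by simp [h3]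
  | 3 => by show 2 * 3 ≤ 3 * h3 2; simp [h3]
  | 4 => by show 2 * 4 ≤ 3 * h3 3; simp [h3]
  | (n+5) => by
      have h := h3_two (n+2)
      show 2 * (3 * h3 (n+2)) ≤ 3 * h3 (n+4)
      have e : n+2+2 = n+4 := rfl
      rw [e] at h
      omega

lemma h3_three : ∀ n, 3 * h3 n ≤ h3 (n+3)
  | 0 => by simp [h3]
  | 1 => by simp [h3]
  | (n+2) => by show 3 * h3 (n+2) ≤ 3 * h3 (n+2); exact le_refl _

lemma h3_key : ∀ s m, 1 ≤ s → s * h3 m ≤ h3 (m + s)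
  | 1, m, _ => by simpa using h3_succ m
  | 2, m, _ => h3_two m
  | 3, m, _ => h3_three m
  | (t+4), m, _ => by
      have ih := h3_key (t+2) m (by omega)
      have l2 := h3_two (m + (t+2))
      have hmul : (t+4) * h3 m ≤ 2 * ((t+2) * h3 m) := by
        have := h3_pos m; nlinarith
      calc (t+4) * h3 m ≤ 2 * ((t+2) * h3 m) := hmul
        _ ≤ 2 * h3 (m + (t+2)) := by omega
        _ ≤ h3 (m + (t+2) + 2) := l2
        _ = h3 (m + (t+4)) := by ring_nf

lemma h3_val (m : ℕ) : h3 (3*m + 2) = 2 * 3^m := by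
  induction m with
  | zero => simp [h3]
  | succ m ih =>
      show h3 (3*m + 2 + 3) = _
      have : 3*m+2+3 = (3*m)+5 := by omega
      rw [this]
      show 3 * h3 (3*m+2) = _
      rw [ih]; ring


lemma indep_symm {V : Type*} (G : SimpleGraph V) :
    Symmetric (fun a b : V => ¬ G.Adj a b) := fun _ _ h hadj => h hadj.symm

lemma erase_map_eq {V : Type*} [DecidableEq V] (G : SimpleGraph V) (u : V)
    (W : Set V) [DecidablePred (· ∈ W)]
    (hW : ∀ w, w ∈ W ↔ ¬ G.Adj u w ∧ w ≠ u) (S : Finset V)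
    (hind : IndepOn G ↑S) (huS : u ∈ S) :
    ((S.erase u).subtype (· ∈ W)).map (Function.Embedding.subtype _) = S.erase u := by
  rw [Finset.subtype_map]
  apply Finset.filter_true_of_mem
  intro w hw
  rw [Finset.mem_erase] at hw
  rw [hW]
  exact ⟨fun hadj => hind (Finset.mem_coe.mpr huS) (Finset.mem_coe.mpr hw.2)
    (Ne.symm hw.1) hadj, hw.1⟩

open Classical in
lemma step_u {V : Type*} [Fintype V] [DecidableEq V] (G : SimpleGraph V) (u : V) (k : ℕ)
    (W : Set V) (hW : ∀ w, w ∈ W ↔ ¬ G.Adj u w ∧ w ≠ u) :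
    ((Finset.univ : Finset (Finset V)).filter
        (fun S => (MaxIndep G S ∧ S.card = k+1) ∧ u ∈ S)).card
      ≤ Nat.card {S' : Finset ↥W // MaxIndep (G.induce W) S' ∧ S'.card = k} := by
  classical
  rw [Nat.card_eq_fintype_card, Fintype.card_subtype]
  apply Finset.card_le_card_of_injOn (fun S => (S.erase u).subtype (· ∈ W))
  · intro S hS
    simp only [Finset.coe_filter, Finset.mem_coe, Set.mem_setOf_eq, Finset.mem_filter, Finset.mem_univ, true_and] at hS ⊢
    obtain ⟨⟨⟨hind, hmax⟩, hcard⟩, huS⟩ := hS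
    have hmap := erase_map_eq G u W hW S hind huS
    refine ⟨⟨?_, ?_⟩, ?_⟩
    · -- independence in induced graph
      intro a ha b hb hab hadj
      have ha' : (a : V) ∈ S.erase u := Finset.mem_subtype.mp (Finset.mem_coe.mp ha)
      have hb' : (b : V) ∈ S.erase u := Finset.mem_subtype.mp (Finset.mem_coe.mp hb)
      have hadj' : G.Adj (a : V) (b : V) := hadj
      exact hind (Finset.mem_coe.mpr (Finset.mem_of_mem_erase ha'))
        (Finset.mem_coe.mpr (Finset.mem_of_mem_erase hb'))
        (fun h => hab (Subtype.ext h)) hadj'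
    · -- maximality
      intro T hTind hsub
      set T' : Finset V := insert u (T.map (Function.Embedding.subtype _)) with hT'
      have hT'ind : IndepOn G ↑T' := by
        rw [hT', Finset.coe_insert]
        unfold IndepOn
        rw [(haveI : Std.Symm (fun a b : V => ¬ G.Adj a b) := ⟨fun _ _ h => indep_symm G h⟩; Set.pairwise_insert_of_symm)]
        constructor
        · intro a ha b hb hab
          rw [Finset.mem_coe, Finset.mem_map] at ha hb
          obtain ⟨x, hx, rfl⟩ := ha
          obtain ⟨y, hy, rfl⟩ := hb
          intro hadj
          have : (G.induce W).Adj x y := hadj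
          exact hTind (Finset.mem_coe.mpr hx) (Finset.mem_coe.mpr hy)
            (fun h => hab (congrArg _ h)) this
        · intro b hb _
          rw [Finset.mem_coe, Finset.mem_map] at hb
          obtain ⟨x, hx, rfl⟩ := hb
          exact ((hW _).mp x.property).1
      have hST' : S ⊆ T' := by
        intro s hs
        rcases eq_or_ne s u with rfl | hne
        · exact Finset.mem_insert_self _ _
        · have hse : s ∈ S.erase u := Finset.mem_erase.mpr ⟨hne, hs⟩
          rw [← hmap] at hse
          exact Finset.mem_insert_of_mem (Finset.map_subset_map.mpr hsub hse)
      have hSeq : S = T' := hmax T' hT'ind hST'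
      apply Finset.Subset.antisymm hsub
      intro x hx
      rw [Finset.mem_subtype]
      have hxT' : (x : V) ∈ T' := Finset.mem_insert_of_mem (Finset.mem_map_of_mem _ hx)
      rw [← hSeq] at hxT'
      exact Finset.mem_erase.mpr ⟨((hW _).mp x.property).2, hxT'⟩
    · -- cardinality
      rw [← Finset.card_map (Function.Embedding.subtype (· ∈ W)), hmap,
        Finset.card_erase_of_mem huS, hcard]
      omega
  · -- injectivity
    intro S hS S2 hS2 heq
    rw [Finset.mem_coe, Finset.mem_filter] at hS hS2
    obtain ⟨_, ⟨⟨hind, _⟩, _⟩, huS⟩ := hS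
    obtain ⟨_, ⟨⟨hind2, _⟩, _⟩, huS2⟩ := hS2
    have h1 := erase_map_eq G u W hW S hind huS
    have h2 := erase_map_eq G u W hW S2 hind2 huS2
    have : S.erase u = S2.erase u := by
      rw [← h1, ← h2]
      exact congrArg _ heq
    calc S = insert u (S.erase u) := (Finset.insert_erase huS).symm
      _ = insert u (S2.erase u) := by rw [this]
      _ = S2 := Finset.insert_erase huS2


lemma count_le (k : ℕ) : ∀ {V : Type u} [Fintype V] (G : SimpleGraph V),
    Nat.card {S : Finset V // MaxIndep G S ∧ S.card = k} ≤ h3 (Fintype.card V) := by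
  induction k with
  | zero =>
    intro V _ G
    have hsub : Subsingleton {S : Finset V // MaxIndep G S ∧ S.card = 0} := by
      constructor
      rintro ⟨S, -, hS⟩ ⟨T, -, hT⟩
      rw [Finset.card_eq_zero] at hS hT
      subst hS; subst hT; rfl
    have hle : Nat.card {S : Finset V // MaxIndep G S ∧ S.card = 0} ≤ 1 := by
      rcases isEmpty_or_nonempty {S : Finset V // MaxIndep G S ∧ S.card = 0} with h | h
      · rw [Nat.card_of_isEmpty]
        exact Nat.zero_le _
      · obtain ⟨a⟩ := h
        exact le_of_eq (Nat.card_of_subsingleton a)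
    exact hle.trans (h3_pos _)
  | succ k ih =>
    intro V _ G
    classical
    rcases isEmpty_or_nonempty V with hV | hV
    · have : IsEmpty {S : Finset V // MaxIndep G S ∧ S.card = k+1} := by
        constructor
        rintro ⟨S, -, hS⟩
        have hne : S.Nonempty := Finset.card_pos.mp (by omega)
        exact hV.elim hne.choose
      rw [Nat.card_of_isEmpty]
      exact Nat.zero_le _
    · set n := Fintype.card V with hn
      set deg : V → ℕ := fun u => (Finset.univ.filter (fun w => G.Adj u w)).card with hdeg
      obtain ⟨v, -, hv⟩ := Finset.exists_min_image Finset.univ deg Finset.univ_nonempty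
      set d := deg v with hd
      set Nv : Finset V := insert v (Finset.univ.filter (fun w => G.Adj v w)) with hNv
      have hvnotadj : v ∉ Finset.univ.filter (fun w => G.Adj v w) := by
        simp [G.irrefl]
      have hNvcard : Nv.card = d + 1 := by
        rw [hNv, Finset.card_insert_of_notMem hvnotadj]
      set A : Finset (Finset V) :=
        Finset.univ.filter (fun S => MaxIndep G S ∧ S.card = k+1) with hA
      have hNatA : Nat.card {S : Finset V // MaxIndep G S ∧ S.card = k+1} = A.card := by
        rw [Nat.card_eq_fintype_card, Fintype.card_subtype]
      rw [hNatA]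
      -- degree bounds
      have hdn : d + 1 ≤ n := by
        have : Finset.univ.filter (fun w => G.Adj v w) ⊆ Finset.univ.erase v := by
          intro w hw
          rw [Finset.mem_filter] at hw
          exact Finset.mem_erase.mpr ⟨(G.ne_of_adj hw.2).symm, Finset.mem_univ w⟩
        have h2 := Finset.card_le_card this
        rw [Finset.card_erase_of_mem (Finset.mem_univ v), Finset.card_univ] at h2
        have hn1 : 1 ≤ Fintype.card V := Fintype.card_pos
        show deg v + 1 ≤ Fintype.card V
        show (Finset.univ.filter (fun w => G.Adj v w)).card + 1 ≤ Fintype.card V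
        omega
      -- step 1
      have hsub : A ⊆ Nv.biUnion (fun u => A.filter (fun S => u ∈ S)) := by
        intro S hS
        rw [Finset.mem_biUnion]
        by_contra hcon
        push_neg at hcon
        have hme : ∀ u ∈ Nv, u ∉ S := by
          intro u hu hus
          exact absurd (Finset.mem_filter.mpr ⟨hS, hus⟩) (hcon u hu)
        obtain ⟨⟨hSind, hSmax⟩, hScard⟩ := (Finset.mem_filter.mp hS).2
        have hvS : v ∉ S := hme v (Finset.mem_insert_self _ _)
        have hindep : IndepOn G ↑(insert v S) := by
          rw [Finset.coe_insert]
          unfold IndepOn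
          rw [(haveI : Std.Symm (fun a b : V => ¬ G.Adj a b) := ⟨fun _ _ h => indep_symm G h⟩; Set.pairwise_insert_of_symm)]
          refine ⟨hSind, ?_⟩
          intro b hb _ hadj
          exact hme b (Finset.mem_insert_of_mem (Finset.mem_filter.mpr
            ⟨Finset.mem_univ b, hadj⟩)) (Finset.mem_coe.mp hb)
        have := hSmax (insert v S) hindep (Finset.subset_insert v S)
        exact hvS (this ▸ Finset.mem_insert_self v S)
      -- per-u bound
      have hper : ∀ u ∈ Nv, (A.filter (fun S => u ∈ S)).card ≤ h3 (n - (d+1)) := by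
        intro u hu
        set W : Set V := {w : V | ¬ G.Adj u w ∧ w ≠ u} with hW
        have hWiff : ∀ w, w ∈ W ↔ ¬ G.Adj u w ∧ w ≠ u := fun w => Iff.rfl
        have h1 : (A.filter (fun S => u ∈ S)).card
            ≤ Nat.card {S' : Finset ↥W // MaxIndep (G.induce W) S' ∧ S'.card = k} := by
          have heq : A.filter (fun S => u ∈ S) =
              Finset.univ.filter (fun S => (MaxIndep G S ∧ S.card = k+1) ∧ u ∈ S) := by
            rw [hA, Finset.filter_filter]
          rw [heq]
          exact step_u G u k W hWiff
        have h2 := ih (G.induce W)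
        -- card of W
        have hWcard : Fintype.card ↥W = n - (deg u + 1) := by
          have e1 : Fintype.card ↥W =
              (Finset.univ.filter (fun w => ¬ G.Adj u w ∧ w ≠ u)).card := by
            rw [Fintype.card_subtype]
            congr 1
          have e2 : (Finset.univ.filter (fun w => G.Adj u w ∨ w = u)).card = deg u + 1 := by
            have : Finset.univ.filter (fun w => G.Adj u w ∨ w = u)
                = insert u (Finset.univ.filter (fun w => G.Adj u w)) := by
              ext w
              simp only [Finset.mem_filter, Finset.mem_univ, true_and, Finset.mem_insert]
              tauto
            rw [this, Finset.card_insert_of_notMem (by simp [G.irrefl])]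
          have e3 := Finset.card_filter_add_card_filter_not
            (s := (Finset.univ : Finset V)) (p := fun w => G.Adj u w ∨ w = u)
          rw [Finset.card_univ, e2] at e3
          have e4 : (Finset.univ.filter (fun w => ¬(G.Adj u w ∨ w = u))).card
              = (Finset.univ.filter (fun w => ¬ G.Adj u w ∧ w ≠ u)).card := by
            congr 1
            apply Finset.filter_congr
            intro w _
            tauto
          rw [e1]
          omega
        have hdu : d ≤ deg u := hv u (Finset.mem_univ u)
        calc (A.filter (fun S => u ∈ S)).card
            ≤ Nat.card {S' : Finset ↥W // MaxIndep (G.induce W) S' ∧ S'.card = k} := h1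
          _ ≤ h3 (Fintype.card ↥W) := h2
          _ ≤ h3 (n - (d+1)) := h3_mono (by omega)
      calc A.card ≤ (Nv.biUnion (fun u => A.filter (fun S => u ∈ S))).card :=
            Finset.card_le_card hsub
        _ ≤ ∑ u ∈ Nv, (A.filter (fun S => u ∈ S)).card := Finset.card_biUnion_le
        _ ≤ ∑ _u ∈ Nv, h3 (n - (d+1)) := Finset.sum_le_sum hper
        _ = (d+1) * h3 (n - (d+1)) := by
            rw [Finset.sum_const, hNvcard, smul_eq_mul]
        _ ≤ h3 n := by
            have := h3_key (d+1) (n - (d+1)) (by omega)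
            have e : n - (d+1) + (d+1) = n := by omega
            rw [e] at this
            exact this

theorem stmt8 {V : Type*} [Fintype V] (G : SimpleGraph V) (n k : ℕ)
    (hcard : Fintype.card V = n) (hk : 1 ≤ k) (hn : n + 1 = 3 * k) :
    Nat.card {S : Finset V // MaxIndep G S ∧ S.card = k} ≤ 2 * 3 ^ (k - 1) := by
  have h := count_le k G
  rw [hcard] at h
  obtain ⟨m, rfl⟩ : ∃ m, k = m + 1 := ⟨k - 1, by omega⟩
  have hn' : n = 3 * m + 2 := by omega
  rw [hn', h3_val] at h
  simpa using h
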